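/- Let a, b ∈ ℂ and r, s > 0 satisfy r + |a| ≤ 1, s + |b| ≤ 1, and r + s ≤ |a − b| (so the open disks B_r(a) and B_s(b) are contained in 𝔻 and are disjoint). Then the function (z, w) ↦ r·s/((r z + a) − (s w + b))² is square-integrable on 𝔻 × 𝔻 if and only if r + s < |a − b|, i.e., if and only if the closed disks of radius r about a and radius s about b are disjoint. -/

import Mathlib

open MeasureTheory Complex Set Metric

set_option maxHeartbeats 2000000
noncomputable section

/-- The open unit disk in ℂ. -/
def unitDisk : Set ℂ := {z : ℂ | ‖z‖ < 1}

/-- The normalized area measure `π⁻¹ · (2-dimensional Lebesgue measure)` on ℂ. -/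
def μB : Measure ℂ := (ENNReal.ofReal (Real.pi)⁻¹) • (volume : Measure ℂ)

instance : SFinite μB := by unfold μB; infer_instance

lemma isOpen_unitDisk : IsOpen unitDisk :=
  isOpen_lt continuous_norm continuous_const

lemma measurableSet_unitDisk : MeasurableSet unitDisk :=
  isOpen_unitDisk.measurableSet

lemma unitDisk_eq : unitDisk = Metric.ball (0:ℂ) 1 := by
  ext z
  simp [unitDisk, Metric.mem_ball, Complex.dist_eq]

lemma μB_ball (c : ℂ) (ρ : ℝ) (hρ : 0 ≤ ρ) : μB (Metric.ball c ρ) = ENNReal.ofReal (ρ^2) := by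
  rw [μB, Measure.smul_apply, smul_eq_mul, Complex.volume_ball]
  rw [show (NNReal.pi : ENNReal) = ENNReal.ofReal Real.pi by
    rw [← ENNReal.ofReal_coe_nnreal]; norm_num [NNReal.coe_real_pi]]
  rw [← ENNReal.ofReal_pow hρ, ← ENNReal.ofReal_mul (by positivity),
    ← ENNReal.ofReal_mul (by positivity)]
  congr 1
  have := Real.pi_pos
  field_simp

lemma μB_unitDisk_ne_top : μB unitDisk ≠ ⊤ := by
  rw [unitDisk_eq, μB_ball _ _ zero_le_one]
  exact ENNReal.ofReal_ne_top

lemma meas_F (a b : ℂ) (r s : ℝ) :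
    Measurable (fun p : ℂ × ℂ =>
      ‖((r : ℂ) * (s : ℂ)) / (((r : ℂ) * p.1 + a) - ((s : ℂ) * p.2 + b)) ^ 2‖ ^ 2) := by
  apply Measurable.pow _ measurable_const
  apply Measurable.norm
  apply Measurable.div measurable_const
  apply Measurable.pow _ measurable_const
  exact ((measurable_const.mul measurable_fst).add measurable_const).sub
    ((measurable_const.mul measurable_snd).add measurable_const)

lemma norm_F (a b : ℂ) (r s : ℝ) (hr : 0 ≤ r) (hs : 0 ≤ s) (p : ℂ × ℂ) :
    ‖((r : ℂ) * (s : ℂ)) / (((r : ℂ) * p.1 + a) - ((s : ℂ) * p.2 + b)) ^ 2‖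
      = r * s / (‖((r : ℂ) * p.1 + a) - ((s : ℂ) * p.2 + b)‖)^2 := by
  rw [norm_div, norm_pow, norm_mul, Complex.norm_real, Real.norm_eq_abs, Complex.norm_real, Real.norm_eq_abs,
    _root_.abs_of_nonneg hr, _root_.abs_of_nonneg hs]

/-- For disks `B_r(a), B_s(b) ⊆ 𝔻` with `r + s ≤ |a − b|`, the kernel
`(z,w) ↦ rs/((rz+a) − (sw+b))²` is square-integrable on `𝔻 × 𝔻` iff
`r + s < |a − b|`, i.e. iff the closed disks are disjoint. -/
theorem statement_18 (a b : ℂ) (r s : ℝ) (hr : 0 < r) (hs : 0 < s)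
    (hra : r + ‖a‖ ≤ 1) (hsb : s + ‖b‖ ≤ 1)
    (hsep : r + s ≤ ‖a - b‖) :
    IntegrableOn
        (fun p : ℂ × ℂ =>
          ‖((r : ℂ) * (s : ℂ)) / (((r : ℂ) * p.1 + a) - ((s : ℂ) * p.2 + b)) ^ 2‖ ^ 2)
        (unitDisk ×ˢ unitDisk) (μB.prod μB)
      ↔ r + s < ‖a - b‖ := by
  constructor
  · intro H
    by_contra hlt
    push_neg at hlt
    have hR : ‖a - b‖ = r + s := le_antisymm hlt hsep
    set F : ℂ × ℂ → ℝ := fun p =>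
      ‖((r : ℂ) * (s : ℂ)) / (((r : ℂ) * p.1 + a) - ((s : ℂ) * p.2 + b)) ^ 2‖ ^ 2 with hF_def
    have hrs : (0:ℝ) < r + s := by linarith
    set u : ℂ := (a - b) / ((r + s : ℝ) : ℂ) with hu_def
    have hcast : (((r + s : ℝ)) : ℂ) ≠ 0 :=
      Complex.ofReal_ne_zero.mpr hrs.ne'
    have hab : a - b = ((r + s : ℝ) : ℂ) * u := by
      rw [hu_def, mul_div_cancel₀ _ hcast]
    have hu : ‖u‖ = 1 := by
      rw [hu_def, norm_div, hR, Complex.norm_real, Real.norm_eq_abs, _root_.abs_of_pos hrs, div_self hrs.ne']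
    set m : ℝ := min (1/5) (s / (5*r)) with hm_def
    have hm : 0 < m := lt_min (by norm_num) (by positivity)
    set ε : ℕ → ℝ := fun k => m / 2^k with hε_def
    have hε0 : ∀ k, 0 < ε k := fun k => by simp only [hε_def]; positivity
    have hεm : ∀ k, ε k ≤ m := by
      intro k
      simp only [hε_def]
      have h1k : (1:ℝ) ≤ 2^k := by
        simpa using pow_le_pow_right₀ (by norm_num : (1:ℝ) ≤ 2) (Nat.zero_le k)
      exact div_le_self hm.le h1k
    have hε5 : ∀ k, ε k ≤ 1/5 := fun k => (hεm k).trans (min_le_left _ _)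
    set δ : ℕ → ℝ := fun k => r * ε k / s with hδ_def
    have hδ0 : ∀ k, 0 < δ k := fun k => by
      simp only [hδ_def]; positivity
    have hδ5 : ∀ k, δ k ≤ 1/5 := by
      intro k
      have h1 : ε k ≤ s / (5*r) := (hεm k).trans (min_le_right _ _)
      simp only [hδ_def]
      rw [div_le_iff₀ hs]
      have h2 := (hε0 k).le
      have h3 : r * ε k ≤ r * (s / (5*r)) := by nlinarith
      calc r * ε k ≤ r * (s / (5*r)) := h3
        _ = 1/5 * s := by field_simp
    have hsδ : ∀ k, s * δ k = r * ε k := fun k => by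
      simp only [hδ_def]; field_simp
    set zc : ℕ → ℂ := fun k =>
      u * (((5*(ε k)^2 - 1 : ℝ) : ℂ) + ((ε k : ℝ) : ℂ) * Complex.I) with hzc_def
    set wc : ℕ → ℂ := fun k =>
      u * (((1 - 5*(δ k)^2 : ℝ) : ℂ) + ((δ k : ℝ) : ℂ) * Complex.I) with hwc_def
    set T : ℕ → Set (ℂ × ℂ) := fun k =>
      Metric.ball (zc k) ((ε k)^2) ×ˢ Metric.ball (wc k) ((δ k)^2) with hT_def
    have hTmeas : ∀ k, MeasurableSet (T k) := fun k =>
      measurableSet_ball.prod measurableSet_ball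
    -- any ball of radius e² around u * (x + e I) with |x| ≤ 1 - 5e² is inside the unit disk
    have hball : ∀ (e x : ℝ) (c : ℂ), 0 < e → e ≤ 1/5 →
        c = u * (((x : ℝ) : ℂ) + ((e : ℝ) : ℂ) * Complex.I) → |x| ≤ 1 - 5*e^2 →
        Metric.ball c (e^2) ⊆ unitDisk := by
      intro e x c he he5 hc hx z hz
      have hzc : ‖z - c‖ < e^2 := by
        rwa [Metric.mem_ball, Complex.dist_eq] at hz
      have habsc : ‖c‖ = Real.sqrt (x^2 + e^2) := by
        rw [hc, norm_mul, hu, one_mul, Complex.norm_add_mul_I]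
      have hx2 : x^2 ≤ (1 - 5*e^2)^2 := by
        have := abs_nonneg x
        nlinarith [_root_.sq_abs x]
      have h1 : Real.sqrt (x^2 + e^2) ≤ 1 - 2*e^2 := by
        rw [show (1 - 2*e^2) = Real.sqrt ((1-2*e^2)^2) from
          (Real.sqrt_sq (by nlinarith)).symm]
        apply Real.sqrt_le_sqrt
        have he2 : e^2 ≤ 1/25 := by nlinarith
        nlinarith [hx2, he2, sq_nonneg e]
      have h2 : ‖z‖ ≤ ‖z - c‖ + ‖c‖ := by
        simpa using norm_add_le (z - c) c
      show ‖z‖ < 1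
      have he2 : 0 < e^2 := by positivity
      rw [habsc] at h2
      nlinarith
    have hTsub : ∀ k, T k ⊆ unitDisk ×ˢ unitDisk := by
      intro k
      simp only [hT_def]
      apply Set.prod_mono
      · apply hball (ε k) (5*(ε k)^2 - 1) (zc k) (hε0 k) (hε5 k) (by rw [hzc_def])
        have h1 : 5*(ε k)^2 ≤ 1/5 := by nlinarith [hε0 k, hε5 k]
        rw [_root_.abs_of_nonpos (by nlinarith)]
        linarith
      · apply hball (δ k) (1 - 5*(δ k)^2) (wc k) (hδ0 k) (hδ5 k) (by rw [hwc_def])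
        have h1 : 5*(δ k)^2 ≤ 1/5 := by nlinarith [hδ0 k, hδ5 k]
        rw [_root_.abs_of_nonneg (by nlinarith)]
    set B : ℕ → ℝ := fun k => r*(ε k)^2 + s*(δ k)^2 with hB_def
    have hB0 : ∀ k, 0 < B k := fun k => by
      simp only [hB_def]
      have := hε0 k; have := hδ0 k
      positivity
    have hDc : ∀ k, ((r:ℂ) * zc k + a) - ((s:ℂ) * wc k + b) = u * ((5 * B k : ℝ) : ℂ) := by
      intro k
      have h2c : ((s:ℂ)) * ((δ k : ℝ):ℂ) = ((r:ℂ)) * ((ε k : ℝ):ℂ) := by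
        have := congrArg Complex.ofReal (hsδ k)
        push_cast at this
        exact this
      have h1 : ((r:ℂ) * zc k + a) - ((s:ℂ) * wc k + b)
          = (r:ℂ) * zc k - (s:ℂ) * wc k + (a - b) := by ring
      rw [h1, hab, hzc_def, hwc_def, hB_def]
      push_cast
      linear_combination (-(u * Complex.I)) * h2c
    set L : ℕ → ℝ := fun k => (r * s / (6 * B k)^2)^2 with hL_def
    have hFlow : ∀ k, ∀ p ∈ T k, L k ≤ F p := by
      intro k p hp
      simp only [hT_def, Set.mem_prod] at hp
      obtain ⟨hp1, hp2⟩ := hp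
      have hz : ‖p.1 - zc k‖ < (ε k)^2 := by
        rwa [Metric.mem_ball, Complex.dist_eq] at hp1
      have hw : ‖p.2 - wc k‖ < (δ k)^2 := by
        rwa [Metric.mem_ball, Complex.dist_eq] at hp2
      set D : ℂ := ((r:ℂ) * p.1 + a) - ((s:ℂ) * p.2 + b) with hD_def
      have hdiff : D - u * ((5 * B k : ℝ) : ℂ) = (r:ℂ)*(p.1 - zc k) - (s:ℂ)*(p.2 - wc k) := by
        rw [hD_def, ← hDc k]; ring
      have habs_diff : ‖D - u * ((5 * B k : ℝ) : ℂ)‖ ≤ B k := by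
        rw [hdiff]
        have t1 : ‖(r:ℂ)*(p.1 - zc k) - (s:ℂ)*(p.2 - wc k)‖
            ≤ ‖(r:ℂ)*(p.1 - zc k)‖ + ‖(s:ℂ)*(p.2 - wc k)‖ := by
          exact norm_sub_le _ _
        have t2 : ‖(r:ℂ)*(p.1 - zc k)‖ = r * ‖p.1 - zc k‖ := by
          rw [norm_mul, Complex.norm_real, Real.norm_eq_abs, _root_.abs_of_pos hr]
        have t3 : ‖(s:ℂ)*(p.2 - wc k)‖ = s * ‖p.2 - wc k‖ := by
          rw [norm_mul, Complex.norm_real, Real.norm_eq_abs, _root_.abs_of_pos hs]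
        rw [t2, t3] at t1
        simp only [hB_def]
        nlinarith [norm_nonneg (p.1 - zc k), norm_nonneg (p.2 - wc k)]
      have habs_c : ‖u * ((5 * B k : ℝ) : ℂ)‖ = 5 * B k := by
        rw [norm_mul, hu, one_mul, Complex.norm_real, Real.norm_eq_abs, _root_.abs_of_pos (by have := hB0 k; positivity)]
      have hDle : ‖D‖ ≤ 6 * B k := by
        have t4 : ‖D‖ ≤ ‖D - u * ((5 * B k : ℝ) : ℂ)‖
            + ‖u * ((5 * B k : ℝ) : ℂ)‖ := by
          simpa using norm_add_le (D - u * ((5 * B k : ℝ) : ℂ)) (u * ((5 * B k : ℝ) : ℂ))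
        rw [habs_c] at t4
        linarith
      have hDge : 4 * B k ≤ ‖D‖ := by
        have t5 : ‖u * ((5 * B k : ℝ) : ℂ)‖
            ≤ ‖D‖ + ‖D - u * ((5 * B k : ℝ) : ℂ)‖ := by
          have heq : u * ((5 * B k : ℝ) : ℂ) = D - (D - u * ((5 * B k : ℝ) : ℂ)) := by ring
          calc ‖u * ((5 * B k : ℝ) : ℂ)‖ = ‖D - (D - u * ((5 * B k : ℝ) : ℂ))‖ := by rw [← heq]
            _ ≤ ‖D‖ + ‖D - u * ((5 * B k : ℝ) : ℂ)‖ := norm_sub_le _ _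
        rw [habs_c] at t5
        linarith
      have hD0 : 0 < ‖D‖ := lt_of_lt_of_le (by have := hB0 k; positivity) hDge
      have hF_eq : F p = (r * s / (‖D‖)^2)^2 := by
        have hn := norm_F a b r s hr.le hs.le p
        simp only [hF_def]
        rw [hn, ← hD_def]
      rw [hF_eq]
      simp only [hL_def]
      have h6 : r * s / (6 * B k)^2 ≤ r * s / (‖D‖)^2 := by
        gcongr
      exact pow_le_pow_left₀ (by positivity) h6 2
    have hμT : ∀ k, (μB.prod μB) (T k) = ENNReal.ofReal ((ε k)^4 * (δ k)^4) := by
      intro k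
      simp only [hT_def]
      rw [Measure.prod_prod, μB_ball _ _ (by positivity), μB_ball _ _ (by positivity),
        ← ENNReal.ofReal_mul (by positivity)]
      congr 1
      ring
    set c₀ : ℝ := (r*s)^2 * (r/s)^4 / (6*(r + r^2/s))^4 with hc0_def
    have hQ : 0 < r + r^2/s := by positivity
    have hc00 : 0 < c₀ := by
      simp only [hc0_def]
      positivity
    have hLμ : ∀ k, L k * ((ε k)^4 * (δ k)^4) = c₀ := by
      intro k
      have hBk : B k = (ε k)^2 * (r + r^2/s) := by
        simp only [hB_def, hδ_def]
        field_simp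
      have hδ4 : (δ k)^4 = (r/s)^4 * (ε k)^4 := by
        simp only [hδ_def]
        field_simp
      simp only [hL_def, hc0_def]
      rw [hBk, hδ4]
      have hεne := (hε0 k).ne'
      field_simp
    have hkey : ∀ k, ENNReal.ofReal c₀
        ≤ ∫⁻ p in T k, ENNReal.ofReal (F p) ∂(μB.prod μB) := by
      intro k
      calc ENNReal.ofReal c₀
          = ENNReal.ofReal (L k) * ENNReal.ofReal ((ε k)^4 * (δ k)^4) := by
            rw [← ENNReal.ofReal_mul (by positivity : (0:ℝ) ≤ L k), hLμ k]
        _ = ENNReal.ofReal (L k) * (μB.prod μB) (T k) := by rw [hμT k]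
        _ = ∫⁻ _ in T k, ENNReal.ofReal (L k) ∂(μB.prod μB) := (setLIntegral_const _ _).symm
        _ ≤ ∫⁻ p in T k, ENNReal.ofReal (F p) ∂(μB.prod μB) :=
            setLIntegral_mono' (hTmeas k) (fun p hp => ENNReal.ofReal_le_ofReal (hFlow k p hp))
    have hdisj : Pairwise (Function.onFun Disjoint T) := by
      have key : ∀ k j, k < j →
          Disjoint (Metric.ball (zc k) ((ε k)^2)) (Metric.ball (zc j) ((ε j)^2)) := by
        intro k j hkj
        apply Metric.ball_disjoint_ball
        rw [Complex.dist_eq]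
        have hj2 : ε j ≤ ε k / 2 := by
          simp only [hε_def]
          have h2j : (2:ℝ)^(k+1) ≤ 2^j := pow_le_pow_right₀ (by norm_num) hkj
          calc m / 2^j ≤ m / 2^(k+1) := by
                apply div_le_div_of_nonneg_left hm.le (by positivity) h2j
            _ = m / 2^k / 2 := by rw [pow_succ]; ring
        have him : ε k - ε j ≤ ‖zc k - zc j‖ := by
          have hzz : zc k - zc j
              = u * ((((5*(ε k)^2 - 1) - (5*(ε j)^2 - 1) : ℝ) : ℂ)
                + ((ε k - ε j : ℝ) : ℂ) * Complex.I) := by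
            simp only [hzc_def]
            push_cast
            ring
          rw [hzz, norm_mul, hu, one_mul, Complex.norm_add_mul_I]
          refine le_trans (le_abs_self _) ?_
          rw [← Real.sqrt_sq_eq_abs]
          apply Real.sqrt_le_sqrt
          nlinarith [sq_nonneg ((5*(ε k)^2 - 1) - (5*(ε j)^2 - 1))]
        nlinarith [hε0 j, hε0 k, hε5 k]
      intro k j hkj
      rcases lt_or_gt_of_ne hkj with h | h
      · exact Disjoint.set_prod_left (key k j h) _ _
      · exact (Disjoint.set_prod_left (key j k h) _ _).symm
    have htop : (∫⁻ p in unitDisk ×ˢ unitDisk, ENNReal.ofReal (F p) ∂(μB.prod μB)) = ⊤ := by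
      refine top_unique ?_
      calc (⊤ : ENNReal) = ∑' _ : ℕ, ENNReal.ofReal c₀ :=
            (ENNReal.tsum_const_eq_top_of_ne_zero
              ((ENNReal.ofReal_pos.mpr hc00).ne')).symm
        _ ≤ ∑' k, ∫⁻ p in T k, ENNReal.ofReal (F p) ∂(μB.prod μB) :=
            ENNReal.tsum_le_tsum hkey
        _ = ∫⁻ p in ⋃ k, T k, ENNReal.ofReal (F p) ∂(μB.prod μB) :=
            (lintegral_iUnion hTmeas hdisj _).symm
        _ ≤ ∫⁻ p in unitDisk ×ˢ unitDisk, ENNReal.ofReal (F p) ∂(μB.prod μB) :=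
            lintegral_mono_set (Set.iUnion_subset hTsub)
    have hfin : (∫⁻ p in unitDisk ×ˢ unitDisk, ENNReal.ofReal (F p) ∂(μB.prod μB)) < ⊤ :=
      H.lintegral_lt_top
    rw [htop] at hfin
    exact lt_irrefl _ hfin
  · intro hlt
    set d : ℝ := ‖a - b‖ - (r + s) with hd
    have hd0 : 0 < d := by simp [hd]; linarith
    refine Measure.integrableOn_of_bounded (M := (r * s / d^2)^2) ?_ ?_ ?_
    · rw [Measure.prod_prod]
      exact ENNReal.mul_ne_top μB_unitDisk_ne_top μB_unitDisk_ne_top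
    · exact (meas_F a b r s).aestronglyMeasurable
    · rw [ae_restrict_iff' (measurableSet_unitDisk.prod measurableSet_unitDisk)]
      refine Filter.Eventually.of_forall (fun p hp => ?_)
      obtain ⟨hz, hw⟩ := hp
      have hz1 : ‖p.1‖ < 1 := hz
      have hw1 : ‖p.2‖ < 1 := hw
      set D : ℂ := ((r : ℂ) * p.1 + a) - ((s : ℂ) * p.2 + b) with hD
      have habs : d ≤ ‖D‖ := by
        have h1 : ‖a - b‖ ≤ ‖D‖ + (s * ‖p.2‖ + r * ‖p.1‖) := by
          have he : a - b = D + (((s : ℂ) * p.2) - ((r : ℂ) * p.1)) := by rw [hD]; ring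
          rw [he]
          refine le_trans (norm_add_le _ _) ?_
          gcongr
          refine (norm_sub_le _ _).trans ?_
          simp [Complex.norm_real, Real.norm_eq_abs, _root_.abs_of_nonneg hr.le,
            _root_.abs_of_nonneg hs.le]
        nlinarith [norm_nonneg p.1, norm_nonneg p.2]
      have hD0 : 0 < ‖D‖ := lt_of_lt_of_le hd0 habs
      have key : ‖((r : ℂ) * (s : ℂ)) / D ^ 2‖ = r * s / (‖D‖)^2 :=
        norm_F a b r s hr.le hs.le p
      rw [Real.norm_of_nonneg (by positivity), key]
      have h2 : r * s / (‖D‖)^2 ≤ r * s / d^2 := by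
        gcongr
      gcongr
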